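/- The number of alternating bridges of length 2k (lattice paths from (0,0) to (2k,0) using steps (1,1), (1,0), (1,-1), where no odd-indexed step goes up and no even-indexed step goes down) having exactly 2i inclined (non-horizontal) steps is (k choose i)^2. -/

import Mathlib

open scoped Classical

/-- The value of an encoded step: `0 ↦ -1` (down), `1 ↦ 0` (horizontal), `2 ↦ 1` (up). -/
def stepVal (j : Fin 3) : ℤ := (j : ℤ) - 1

/-- `s` encodes an alternating bridge of length `2k`: a lattice path from `(0,0)` to `(2k,0)`
with steps `(1,1)`, `(1,0)`, `(1,-1)` (so the vertical displacements sum to `0`), where no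
odd-numbered step goes up and no even-numbered step goes down.  Step number `i+1` corresponds
to index `i : Fin (2*k)`. -/
def IsAltBridge {k : ℕ} (s : Fin (2 * k) → Fin 3) : Prop :=
  (∑ i, stepVal (s i)) = 0 ∧
  (∀ i : Fin (2 * k), (i : ℕ) % 2 = 0 → stepVal (s i) ≠ 1) ∧
  (∀ i : Fin (2 * k), (i : ℕ) % 2 = 1 → stepVal (s i) ≠ -1)

/-! ### Auxiliary definitions -/

def evenIdx {k : ℕ} (a : Fin k) : Fin (2 * k) := ⟨2 * (a : ℕ), by have := a.isLt; omega⟩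
def oddIdx {k : ℕ} (a : Fin k) : Fin (2 * k) := ⟨2 * (a : ℕ) + 1, by have := a.isLt; omega⟩

def toStep {k : ℕ} (A B : Finset (Fin k)) (j : Fin (2 * k)) : Fin 3 :=
  if (j : ℕ) % 2 = 0 then
    (if (⟨(j : ℕ) / 2, by have := j.isLt; omega⟩ : Fin k) ∈ A then 0 else 1)
  else
    (if (⟨(j : ℕ) / 2, by have := j.isLt; omega⟩ : Fin k) ∈ B then 2 else 1)

noncomputable def fromA {k : ℕ} (s : Fin (2 * k) → Fin 3) : Finset (Fin k) :=
  Finset.univ.filter (fun a => s (evenIdx a) = 0)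

noncomputable def fromB {k : ℕ} (s : Fin (2 * k) → Fin 3) : Finset (Fin k) :=
  Finset.univ.filter (fun a => s (oddIdx a) = 2)

/-! ### Small `Fin 3` facts -/

lemma fin3_ne_two (x : Fin 3) (h : stepVal x ≠ 1) : x ≠ 2 := by
  revert h; revert x; decide

lemma fin3_ne_zero (x : Fin 3) (h : stepVal x ≠ -1) : x ≠ 0 := by
  revert h; revert x; decide

lemma stepVal_of_ne_two (x : Fin 3) (h : x ≠ 2) :
    stepVal x = if x = 0 then -1 else 0 := by
  revert h; revert x; decide

lemma stepVal_of_ne_zero (x : Fin 3) (h : x ≠ 0) :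
    stepVal x = if x = 2 then 1 else 0 := by
  revert h; revert x; decide

lemma fin3_eq_one (x : Fin 3) (h0 : x ≠ 0) (h2 : x ≠ 2) : x = 1 := by
  revert h0 h2; revert x; decide

/-! ### Splitting sums over `Fin (2*k)` into even/odd parts -/

lemma sum_range_two_mul {M : Type*} [AddCommMonoid M] (k : ℕ) (g : ℕ → M) :
    ∑ n ∈ Finset.range (2 * k), g n = ∑ a ∈ Finset.range k, (g (2 * a) + g (2 * a + 1)) := by
  induction k with
  | zero => simp
  | succ n ih =>
    rw [show 2 * (n + 1) = (2 * n + 1) + 1 by ring, Finset.sum_range_succ,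
      Finset.sum_range_succ, Finset.sum_range_succ, ih]
    abel

lemma sum_fin_two_mul {M : Type*} [AddCommMonoid M] {k : ℕ} (f : Fin (2 * k) → M) :
    ∑ j, f j = ∑ a : Fin k, (f (evenIdx a) + f (oddIdx a)) := by
  classical
  set g : ℕ → M := fun n => if h : n < 2 * k then f ⟨n, h⟩ else 0 with hg
  have h1 : ∑ j, f j = ∑ n ∈ Finset.range (2 * k), g n := by
    rw [← Fin.sum_univ_eq_sum_range]
    exact Finset.sum_congr rfl fun j _ => by simp [hg, j.isLt]
  rw [h1, sum_range_two_mul, ← Fin.sum_univ_eq_sum_range (fun a => g (2 * a) + g (2 * a + 1)) k]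
  refine Finset.sum_congr rfl fun a _ => ?_
  have h2 : 2 * (a : ℕ) < 2 * k := by have := a.isLt; omega
  have h3 : 2 * (a : ℕ) + 1 < 2 * k := by have := a.isLt; omega
  simp only [hg, dif_pos h2, dif_pos h3]
  rfl

/-! ### Key computations -/

lemma toStep_even {k : ℕ} (A B : Finset (Fin k)) (a : Fin k) :
    toStep A B (evenIdx a) = if a ∈ A then 0 else 1 := by
  have h : (2 * (a : ℕ)) % 2 = 0 := by omega
  have h2 : (2 * (a : ℕ)) / 2 = (a : ℕ) := by omega
  simp [toStep, evenIdx, h, h2]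

lemma toStep_odd {k : ℕ} (A B : Finset (Fin k)) (a : Fin k) :
    toStep A B (oddIdx a) = if a ∈ B then 2 else 1 := by
  have h : (2 * (a : ℕ) + 1) % 2 = 1 := by omega
  have h2 : (2 * (a : ℕ) + 1) / 2 = (a : ℕ) := by omega
  simp [toStep, oddIdx, h, h2]

lemma sum_eq {k : ℕ} (s : Fin (2 * k) → Fin 3)
    (hA : ∀ a : Fin k, s (evenIdx a) ≠ 2) (hB : ∀ a : Fin k, s (oddIdx a) ≠ 0) :
    (∑ j, stepVal (s j)) = ((fromB s).card : ℤ) - ((fromA s).card : ℤ) := by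
  rw [sum_fin_two_mul (fun j => stepVal (s j))]
  have : ∀ a : Fin k, stepVal (s (evenIdx a)) + stepVal (s (oddIdx a)) =
      (if a ∈ fromB s then (1 : ℤ) else 0) + (if a ∈ fromA s then (-1 : ℤ) else 0) := by
    intro a
    rw [stepVal_of_ne_two _ (hA a), stepVal_of_ne_zero _ (hB a)]
    simp [fromA, fromB]
    ring
  rw [Finset.sum_congr rfl (fun a _ => this a), Finset.sum_add_distrib]
  rw [Finset.sum_ite_mem, Finset.sum_ite_mem, Finset.univ_inter, Finset.univ_inter,
    Finset.sum_const, Finset.sum_const]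
  simp
  ring

lemma card_eq {k : ℕ} (s : Fin (2 * k) → Fin 3)
    (hA : ∀ a : Fin k, s (evenIdx a) ≠ 2) (hB : ∀ a : Fin k, s (oddIdx a) ≠ 0) :
    (Finset.univ.filter (fun j : Fin (2 * k) => stepVal (s j) ≠ 0)).card =
      (fromA s).card + (fromB s).card := by
  classical
  rw [Finset.card_filter]
  rw [sum_fin_two_mul (fun j => if stepVal (s j) ≠ 0 then 1 else 0)]
  have : ∀ a : Fin k, ((if stepVal (s (evenIdx a)) ≠ 0 then (1:ℕ) else 0) +
      (if stepVal (s (oddIdx a)) ≠ 0 then (1:ℕ) else 0)) =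
      (if a ∈ fromA s then (1:ℕ) else 0) + (if a ∈ fromB s then (1:ℕ) else 0) := by
    intro a
    rw [stepVal_of_ne_two _ (hA a), stepVal_of_ne_zero _ (hB a)]
    by_cases h1 : s (evenIdx a) = 0 <;> by_cases h2 : s (oddIdx a) = 2 <;>
      simp [fromA, fromB, h1, h2]
  rw [Finset.sum_congr rfl (fun a _ => this a), Finset.sum_add_distrib,
    Finset.sum_ite_mem, Finset.sum_ite_mem, Finset.univ_inter, Finset.univ_inter,
    Finset.sum_const, Finset.sum_const]
  simp

lemma fromA_toStep {k : ℕ} (A B : Finset (Fin k)) : fromA (toStep A B) = A := by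
  ext a
  simp [fromA, toStep_even]

lemma fromB_toStep {k : ℕ} (A B : Finset (Fin k)) : fromB (toStep A B) = B := by
  ext a
  simp [fromB, toStep_odd]

lemma toStep_hA {k : ℕ} (A B : Finset (Fin k)) (a : Fin k) : toStep A B (evenIdx a) ≠ 2 := by
  rw [toStep_even]; split <;> decide

lemma toStep_hB {k : ℕ} (A B : Finset (Fin k)) (a : Fin k) : toStep A B (oddIdx a) ≠ 0 := by
  rw [toStep_odd]; split <;> decide

lemma toStep_fromAB {k : ℕ} (s : Fin (2 * k) → Fin 3)
    (hA : ∀ a : Fin k, s (evenIdx a) ≠ 2) (hB : ∀ a : Fin k, s (oddIdx a) ≠ 0) :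
    toStep (fromA s) (fromB s) = s := by
  funext j
  rcases Nat.even_or_odd (j : ℕ) with he | ho
  · have hm : (j : ℕ) % 2 = 0 := Nat.even_iff.mp he
    set a : Fin k := ⟨(j : ℕ) / 2, by have := j.isLt; omega⟩ with ha
    have hj : j = evenIdx a := by
      apply Fin.ext; simp only [ha, evenIdx]; omega
    have h := hA a
    rw [hj, toStep_even]
    simp only [fromA, Finset.mem_filter, Finset.mem_univ, true_and]
    by_cases h0 : s (evenIdx a) = 0
    · rw [if_pos h0, h0]
    · rw [if_neg h0, fin3_eq_one _ h0 h]
  · have hm : (j : ℕ) % 2 = 1 := Nat.odd_iff.mp ho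
    set a : Fin k := ⟨(j : ℕ) / 2, by have := j.isLt; omega⟩ with ha
    have hj : j = oddIdx a := by
      apply Fin.ext; simp only [ha, oddIdx]; omega
    have h := hB a
    rw [hj, toStep_odd]
    simp only [fromB, Finset.mem_filter, Finset.mem_univ, true_and]
    by_cases h2 : s (oddIdx a) = 2
    · rw [if_pos h2, h2]
    · rw [if_neg h2, fin3_eq_one _ h h2]

/-- The number of alternating bridges of length `2k` having exactly `2i` inclined
(non-horizontal) steps is `(k.choose i)^2`. -/
theorem altBridge_card_inclined (k i : ℕ) :
    (Finset.univ.filter (fun s : Fin (2 * k) → Fin 3 =>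
      IsAltBridge s ∧
        (Finset.univ.filter (fun j : Fin (2 * k) => stepVal (s j) ≠ 0)).card = 2 * i)).card
      = (k.choose i) ^ 2 := by
  classical
  have hcard : ((Finset.univ.powersetCard i ×ˢ Finset.univ.powersetCard i) :
      Finset (Finset (Fin k) × Finset (Fin k))).card = (k.choose i) ^ 2 := by
    rw [Finset.card_product, Finset.card_powersetCard, Finset.card_univ, Fintype.card_fin, sq]
  rw [← hcard]
  apply Finset.card_nbij' (fun s => (fromA s, fromB s)) (fun p => toStep p.1 p.2)
  · -- forward membership
    intro s hs
    rw [Finset.mem_coe, Finset.mem_filter] at hs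
    obtain ⟨-, ⟨hsum, h2, h3⟩, hcnt⟩ := hs
    have hA : ∀ a : Fin k, s (evenIdx a) ≠ 2 := fun a =>
      fin3_ne_two _ (h2 (evenIdx a) (by simp only [evenIdx]; omega))
    have hB : ∀ a : Fin k, s (oddIdx a) ≠ 0 := fun a =>
      fin3_ne_zero _ (h3 (oddIdx a) (by simp only [oddIdx]; omega))
    have e1 := sum_eq s hA hB
    have e2 := card_eq s hA hB
    rw [hsum] at e1
    rw [hcnt] at e2
    have hAc : (fromA s).card = i := by omega
    have hBc : (fromB s).card = i := by omega
    simp [Finset.mem_product, Finset.mem_powersetCard_univ, hAc, hBc]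
  · -- backward membership
    intro p hp
    rw [Finset.mem_coe, Finset.mem_product, Finset.mem_powersetCard_univ, Finset.mem_powersetCard_univ] at hp
    obtain ⟨hp1, hp2⟩ := hp
    dsimp only
    rw [Finset.mem_coe, Finset.mem_filter]
    refine ⟨Finset.mem_univ _, ⟨?_, ?_, ?_⟩, ?_⟩
    · rw [sum_eq _ (toStep_hA p.1 p.2) (toStep_hB p.1 p.2), fromA_toStep, fromB_toStep,
        hp1, hp2]
      ring
    · intro j hj
      have : toStep p.1 p.2 j ≠ 2 := by
        unfold toStep
        rw [if_pos hj]
        split <;> decide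
      revert this
      generalize toStep p.1 p.2 j = x
      revert x; decide
    · intro j hj
      have hj' : ¬ ((j : ℕ) % 2 = 0) := by omega
      have : toStep p.1 p.2 j ≠ 0 := by
        unfold toStep
        rw [if_neg hj']
        split <;> decide
      revert this
      generalize toStep p.1 p.2 j = x
      revert x; decide
    · rw [card_eq _ (toStep_hA p.1 p.2) (toStep_hB p.1 p.2), fromA_toStep, fromB_toStep,
        hp1, hp2]
      omega
  · -- left inverse
    intro s hs
    rw [Finset.mem_coe, Finset.mem_filter] at hs
    obtain ⟨-, ⟨-, h2, h3⟩, -⟩ := hs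
    have hA : ∀ a : Fin k, s (evenIdx a) ≠ 2 := fun a =>
      fin3_ne_two _ (h2 (evenIdx a) (by simp only [evenIdx]; omega))
    have hB : ∀ a : Fin k, s (oddIdx a) ≠ 0 := fun a =>
      fin3_ne_zero _ (h3 (oddIdx a) (by simp only [oddIdx]; omega))
    exact toStep_fromAB s hA hB
  · -- right inverse
    intro p hp
    dsimp only
    rw [fromA_toStep, fromB_toStep]
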